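/- arXiv:1512.08041 — 5 statements merged into one kernel-verified Lean document; each statement's English description precedes it below -/
import Mathlib

section
/- Let M be an m×n Boolean matrix, U an m×k Boolean matrix, and V an n×k Boolean matrix such that M = U ∘ Vᵀ. Define the n×k Boolean matrix J = complement of (M̄ᵀ ∘ U). Then M = U ∘ Jᵀ. -/
/-- If M = U ∘ Vᵀ (where M is m×n, U is m×k, V is n×k) and
J = complement of (M̄ᵀ ∘ U) (an n×k Boolean matrix), then M = U ∘ Jᵀ.
Here (U∘Jᵀ)[i,j] = ⋁_t (U[i,t] ∧ J[j,t]) and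
(M̄ᵀ ∘ U)[i,j] = ⋁_t (¬M[t,i] ∧ U[t,j]). -/
theorem stmt_6 (m n k : ℕ) (M : Matrix (Fin m) (Fin n) Bool)
    (U : Matrix (Fin m) (Fin k) Bool) (V : Matrix (Fin n) (Fin k) Bool)
    (hM : ∀ i j, M i j = decide (∃ t : Fin k, U i t = true ∧ V j t = true))
    (J : Matrix (Fin n) (Fin k) Bool)
    (hJ : ∀ i j, J i j = !(decide (∃ t : Fin m, (!(M t i)) = true ∧ U t j = true))) :
    ∀ i j, M i j = decide (∃ t : Fin k, U i t = true ∧ J j t = true) := by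
  intro i j
  have hJ' : ∀ p t, J p t = true ↔ ∀ s : Fin m, U s t = true → M s p = true := by
    intro p t
    rw [hJ]
    simp only [Bool.not_eq_true', decide_eq_false_iff_not]
    constructor
    · intro h s hs
      by_contra hc
      exact h ⟨s, by simp [hc], hs⟩
    · rintro h ⟨s, hs1, hs2⟩
      simp [h s hs2] at hs1
  by_cases hMij : M i j = true
  · rw [hMij]
    symm
    rw [decide_eq_true_iff]
    have := hM i j
    rw [hMij] at this
    obtain ⟨t, ht1, ht2⟩ := decide_eq_true_iff.mp this.symm
    refine ⟨t, ht1, (hJ' j t).mpr ?_⟩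
    intro s hs
    rw [hM s j]
    exact decide_eq_true ⟨t, hs, ht2⟩
  · simp only [Bool.not_eq_true] at hMij
    rw [hMij]
    symm
    rw [decide_eq_false_iff_not]
    rintro ⟨t, ht1, ht2⟩
    have := (hJ' j t).mp ht2 i ht1
    rw [hMij] at this
    exact Bool.false_ne_true this
end

section
/- Let M be an arbitrary m×n Boolean matrix and define the n×n Boolean matrix J = complement of (M̄ᵀ ∘ M). Then for every n×n Boolean matrix V satisfying M = M ∘ Vᵀ, one has V ≤ J (entrywise). Moreover M = M ∘ Jᵀ itself holds. -/
/-- For an arbitrary m×n Boolean matrix M and J = complement of (M̄ᵀ ∘ M),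
every n×n Boolean matrix V with M = M ∘ Vᵀ satisfies V ≤ J, and moreover M = M ∘ Jᵀ.
Here (M∘Vᵀ)[i,j] = ⋁_t (M[i,t] ∧ V[j,t]) and (M̄ᵀ∘M)[i,j] = ⋁_t (¬M[t,i] ∧ M[t,j]). -/
theorem stmt_7 (m n : ℕ) (M : Matrix (Fin m) (Fin n) Bool)
    (J : Matrix (Fin n) (Fin n) Bool)
    (hJ : ∀ i j, J i j = !(decide (∃ t : Fin m, (!(M t i)) = true ∧ M t j = true))) :
    (∀ V : Matrix (Fin n) (Fin n) Bool,
        (∀ i j, M i j = decide (∃ t : Fin n, M i t = true ∧ V j t = true)) →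
        ∀ i j, V i j ≤ J i j) ∧
    (∀ i j, M i j = decide (∃ t : Fin n, M i t = true ∧ J j t = true)) := by
  have hJiff : ∀ i j, J i j = true ↔ ∀ t, M t j = true → M t i = true := by
    intro i j
    rw [hJ]
    simp only [Bool.not_eq_true', decide_eq_false_iff_not, not_exists, not_and,
      Bool.not_eq_true, Bool.not_eq_false]
    constructor
    · intro h t ht
      rcases Bool.eq_false_or_eq_true (M t i) with h' | h'
      · exact h'
      · exact absurd (h t h') (by simp [ht])
    · intro h t hti
      rcases Bool.eq_false_or_eq_true (M t j) with htj | htj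
      · rw [h t htj] at hti; exact Bool.noConfusion hti
      · exact htj
  constructor
  · intro V hV i j
    rcases Bool.eq_false_or_eq_true (V i j) with h | h
    · have : J i j = true := by
        rw [hJiff]
        intro t ht
        rw [hV t i, decide_eq_true_eq]
        exact ⟨j, ht, h⟩
      simp [h, this]
    · simp [h]
  · intro i j
    rcases Bool.eq_false_or_eq_true (M i j) with h | h
    · rw [h]
      symm
      rw [decide_eq_true_eq]
      exact ⟨j, h, (hJiff j j).mpr fun t ht => ht⟩
    · rw [h]
      symm
      rw [decide_eq_false_iff_not]
      rintro ⟨t, ht1, ht2⟩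
      have := (hJiff j t).mp ht2 i ht1
      simp [h] at this
end

section
/- Let M be an m×n Boolean matrix and J = complement of (M̄ᵀ ∘ M). Then for all indices i, j ∈ {1,…,n}: J[i,j] = J[j,i] = 1 if and only if M[:,i] = M[:,j], and this holds if and only if J[:,i] = J[:,j] and J[i,:] = J[j,:]. -/
/-- With J = complement of (M̄ᵀ ∘ M), for all i, j:
J[i,j] = J[j,i] = 1 iff M[:,i] = M[:,j], iff (J[:,i] = J[:,j] and J[i,:] = J[j,:]). -/
theorem stmt_9 (m n : ℕ) (M : Matrix (Fin m) (Fin n) Bool)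
    (J : Matrix (Fin n) (Fin n) Bool)
    (hJ : ∀ i j, J i j = !(decide (∃ t : Fin m, (!(M t i)) = true ∧ M t j = true))) :
    ∀ i j : Fin n,
      ((J i j = true ∧ J j i = true) ↔ (∀ t, M t i = M t j)) ∧
      ((∀ t, M t i = M t j) ↔ ((∀ t, J t i = J t j) ∧ (∀ t, J i t = J j t))) := by
  have key : ∀ i j : Fin n, J i j = true ↔ ∀ t, M t j = true → M t i = true := by
    intro i j
    rw [hJ]
    simp only [Bool.not_eq_true', decide_eq_false_iff_not, not_exists, not_and]
    constructor
    · intro h t htj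
      cases hmi : M t i with
      | true => rfl
      | false => exact absurd htj (h t hmi)
    · intro h t hti htj
      simp [h t htj] at hti
  intro i j
  have h1 : (J i j = true ∧ J j i = true) ↔ (∀ t, M t i = M t j) := by
    rw [key, key]
    constructor
    · rintro ⟨h1, h2⟩ t
      cases hti : M t i with
      | true => exact (h2 t hti).symm
      | false =>
        cases htj : M t j with
        | true => exact absurd (h1 t htj) (by simp [hti])
        | false => rfl
    · intro h
      exact ⟨fun t ht => (h t).trans ht, fun t ht => (h t).symm.trans ht⟩
  refine ⟨h1, ?_⟩
  constructor
  · intro h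
    constructor
    · intro t
      rw [Bool.eq_iff_iff, key, key]
      constructor
      · intro hk s hs; exact hk s ((h s) ▸ hs)
      · intro hk s hs; exact hk s ((h s).symm ▸ hs)
    · intro t
      rw [Bool.eq_iff_iff, key, key]
      constructor
      · intro hk s hs; exact (h s).symm ▸ hk s hs
      · intro hk s hs; exact (h s) ▸ hk s hs
  · rintro ⟨hc, hr⟩
    apply h1.mp
    have hii : J i i = true := (key i i).mpr fun t ht => ht
    exact ⟨(hc i) ▸ hii, (hr i) ▸ hii⟩
end

section
/- Let M be an m×n Boolean matrix and J = complement of (M̄ᵀ ∘ M). Then for all indices i, j ∈ {1,…,n}: (J[i,j] = 1 and J[j,i] = 0) if and only if column i of M strictly dominates column j of M (i.e., M[:,i] ≥ M[:,j] entrywise and M[:,i] ≠ M[:,j]); moreover, in that case J[:,j] strictly dominates J[:,i] and J[i,:] strictly dominates J[j,:]. -/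
lemma bool_le_iff (a b : Bool) : a ≤ b ↔ (a = true → b = true) := by
  cases a <;> cases b <;> simp

/-- With J = complement of (M̄ᵀ ∘ M), for all i, j:
(J[i,j] = 1 and J[j,i] = 0) iff column i of M strictly dominates column j of M;
moreover in that case J[:,j] strictly dominates J[:,i] and J[i,:] strictly
dominates J[j,:]. -/
theorem stmt_10 (m n : ℕ) (M : Matrix (Fin m) (Fin n) Bool)
    (J : Matrix (Fin n) (Fin n) Bool)
    (hJ : ∀ i j, J i j = !(decide (∃ t : Fin m, (!(M t i)) = true ∧ M t j = true))) :
    ∀ i j : Fin n,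
      ((J i j = true ∧ J j i = false) ↔
        ((∀ t, M t j ≤ M t i) ∧ (fun t => M t i) ≠ (fun t => M t j))) ∧
      ((J i j = true ∧ J j i = false) →
        (((∀ t, J t i ≤ J t j) ∧ (fun t => J t j) ≠ (fun t => J t i)) ∧
         ((∀ t, J j t ≤ J i t) ∧ (fun t => J i t) ≠ (fun t => J j t)))) := by
  have hJt : ∀ i j : Fin n, J i j = true ↔ ∀ t, M t j ≤ M t i := by
    intro i j
    rw [hJ]
    simp only [Bool.not_eq_true', decide_eq_false_iff_not, not_exists]
    constructor
    · intro h t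
      rw [bool_le_iff]
      intro hj
      have := h t
      simp [hj] at this
      exact this
    · intro h t ⟨h1, h2⟩
      have := (bool_le_iff _ _).mp (h t) h2
      simp [this] at h1
  have hJf : ∀ i j : Fin n, J i j = false ↔ ¬ ∀ t, M t j ≤ M t i := by
    intro i j
    rw [← hJt i j]
    cases J i j <;> simp
  intro i j
  have main : (J i j = true ∧ J j i = false) ↔
      ((∀ t, M t j ≤ M t i) ∧ (fun t => M t i) ≠ (fun t => M t j)) := by
    rw [hJt, hJf]
    constructor
    · rintro ⟨h1, h2⟩
      refine ⟨h1, fun he => h2 fun t => ?_⟩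
      have := congrFun he t
      rw [this]
    · rintro ⟨h1, h2⟩
      refine ⟨h1, fun hle => h2 ?_⟩
      funext t
      exact le_antisymm (hle t) (h1 t)
  refine ⟨main, ?_⟩
  rintro ⟨h1, h2⟩
  have hji : ∀ t, M t j ≤ M t i := (hJt i j).mp h1
  have hnij : ¬ ∀ t, M t i ≤ M t j := (hJf j i).mp h2
  constructor
  · refine ⟨fun t => ?_, fun he => ?_⟩
    · rw [bool_le_iff]
      intro hti
      rw [hJt] at hti ⊢
      exact fun s => le_trans (hji s) (hti s)
    · have hjj : J j j = true := (hJt j j).mpr fun t => le_refl _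
      have := congrFun he j
      rw [hjj, h2] at this
      exact Bool.true_eq_false.mp this
  · refine ⟨fun t => ?_, fun he => ?_⟩
    · rw [bool_le_iff]
      intro htj
      rw [hJt] at htj ⊢
      exact fun s => le_trans (htj s) (hji s)
    · have hii : J i i = true := (hJt i i).mpr fun t => le_refl _
      have := congrFun he i
      rw [hii, h2] at this
      exact Bool.true_eq_false.mp this
end

section
/- Let M be an m×n Boolean matrix with no all-zero row and no all-zero column, and let J = complement of (M̄ᵀ ∘ M). If J' is obtained from J by changing any single 0 entry of J to a 1 (i.e., J'[i,j] = 1 for some pair (i,j) with J[i,j] = 0, and J' agrees with J elsewhere), then M ≠ M ∘ J'ᵀ. -/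
/-- Let M be an m×n Boolean matrix with no all-zero row and no all-zero
column, and J = complement of (M̄ᵀ ∘ M). If J' is obtained from J by changing a single
0 entry of J to a 1, then M ≠ M ∘ J'ᵀ.
Here (M∘J'ᵀ)[s,t] = ⋁_r (M[s,r] ∧ J'[t,r]). -/
theorem stmt_11 (m n : ℕ) (M : Matrix (Fin m) (Fin n) Bool)
    (hrow : ∀ i, ∃ j, M i j = true) (hcol : ∀ j, ∃ i, M i j = true)
    (J : Matrix (Fin n) (Fin n) Bool)
    (hJ : ∀ i j, J i j = !(decide (∃ t : Fin m, (!(M t i)) = true ∧ M t j = true)))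
    (i j : Fin n) (hij : J i j = false)
    (J' : Matrix (Fin n) (Fin n) Bool)
    (hJ'1 : J' i j = true)
    (hJ'2 : ∀ i' j', (i', j') ≠ (i, j) → J' i' j' = J i' j') :
    ¬ (∀ s t, M s t = decide (∃ r : Fin n, M s r = true ∧ J' t r = true)) := by
  intro h
  have h1 := hJ i j
  rw [hij] at h1
  have h2 : ∃ t : Fin m, M t i = false ∧ M t j = true := by
    simpa using h1.symm
  obtain ⟨t, hti, htj⟩ := h2
  have := h t i
  rw [hti] at this
  have : ¬ ∃ r : Fin n, M t r = true ∧ J' i r = true := by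
    simpa using this.symm
  exact this ⟨j, htj, hJ'1⟩
end
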